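/- arXiv:2303.16489 — 3 statements merged into one kernel-verified Lean document; each statement's English description precedes it below -/
import Mathlib

section
/- Let S = {z ∈ ℂ : |Im z| < π/2} be the standard horizontal strip and let G be the infinitesimal generator of a semigroup (F_t)_{t≥0} on S whose Denjoy–Wolff point is the prime end +∞, i.e. F_t(z) → ∞ locally uniformly on S as t → ∞ with Re F_t(z) → +∞. Then there exists a holomorphic function q : S → ℂ with Re q(z) ≥ 0 for all z ∈ S such that G(z) = e^{−z} q(z) for all z ∈ S. -/
open Filter MeasureTheory Set Metric

noncomputable section

open Topology Complex

variable {E : Type*} [NormedAddCommGroup E] [NormedSpace ℂ E]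

/-- Continuity of `t ↦ F t` on `[0,∞)` with respect to locally uniform convergence on `D`. -/
def ContLocUnifOn (D : Set E) (F : ℝ → E → E) : Prop :=
  ∀ t₀ ∈ Set.Ici (0 : ℝ),
    TendstoLocallyUniformlyOn F (F t₀) (nhdsWithin t₀ (Set.Ici 0)) D

/-- `(F t)_{t≥0}` is a semigroup of holomorphic self-maps of `D`:
`F 0 = id`, `F (t+s) = F s ∘ F t`, and `t ↦ F t` is continuous with respect to
locally uniform convergence on `D`. -/
def IsHoloSemigroupOn (D : Set E) (F : ℝ → E → E) : Prop :=
  (∀ t : ℝ, 0 ≤ t → Set.MapsTo (F t) D D ∧ DifferentiableOn ℂ (F t) D) ∧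
  (∀ z ∈ D, F 0 z = z) ∧
  (∀ s t : ℝ, 0 ≤ s → 0 ≤ t → ∀ z ∈ D, F (t + s) z = F s (F t z)) ∧
  ContLocUnifOn D F

/-- `G` is the infinitesimal generator of the semigroup `F` on `D`, i.e.
`G(z) = lim_{t↓0} (F t z - z)/t` locally uniformly on `D`. -/
def IsGeneratorOf (D : Set E) (F : ℝ → E → E) (G : E → E) : Prop :=
  IsHoloSemigroupOn D F ∧
  TendstoLocallyUniformlyOn (fun (t : ℝ) (z : E) => t⁻¹ • (F t z - z)) G
    (nhdsWithin 0 (Set.Ioi 0)) D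

/-- `G` is an infinitesimal generator on `D`. -/
def IsInfGen (D : Set E) (G : E → E) : Prop :=
  ∃ F : ℝ → E → E, IsGeneratorOf D F G

/-- `J` is a nonlinear resolvent of `G` at time `t` on `D`: a holomorphic self-map
of `D` with `J w - t • G (J w) = w` on `D`. -/
def IsResolventAt (D : Set E) (G : E → E) (t : ℝ) (J : E → E) : Prop :=
  Set.MapsTo J D D ∧ DifferentiableOn ℂ J D ∧ ∀ w ∈ D, J w - t • G (J w) = w

/-- `(f t)_{t≥0}` is a decreasing Loewner chain on `D`. -/
def IsDecLoewnerChain (D : Set E) (f : ℝ → E → E) : Prop :=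
  (∀ t : ℝ, 0 ≤ t →
      Set.MapsTo (f t) D D ∧ DifferentiableOn ℂ (f t) D ∧ Set.InjOn (f t) D) ∧
  (∀ z ∈ D, f 0 z = z) ∧
  (∀ s t : ℝ, 0 ≤ s → s ≤ t → f t '' D ⊆ f s '' D) ∧
  ContLocUnifOn D f


lemma my_div_re (z w : ℂ) : (z / w).re = (z * (starRingEnd ℂ) w).re / Complex.normSq w := by
  rw [Complex.div_re, Complex.mul_re, Complex.conj_re, Complex.conj_im]; ring

lemma my_num_re (a c : ℂ) : ((a + (starRingEnd ℂ) a * c) * (starRingEnd ℂ) (1 - c)).re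
    = a.re * (1 - Complex.normSq c) := by
  simp [Complex.mul_re, Complex.add_re, Complex.sub_re, Complex.mul_im, Complex.add_im,
    Complex.sub_im, Complex.normSq_apply]
  ring

lemma my_normSq_sub (X Y : ℂ) :
    Complex.normSq (X - Y) = Complex.normSq (X + (starRingEnd ℂ) Y) - 4 * X.re * Y.re := by
  simp [Complex.normSq_apply, Complex.add_re, Complex.add_im, Complex.sub_re, Complex.sub_im]
  ring

lemma my_abs_lt {u w : ℂ} (hu : 0 < u.re) (hw : 0 < w.re) :
    ‖u - w‖ < ‖u + (starRingEnd ℂ) w‖ := by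
  have h1 : Complex.normSq (u - w) < Complex.normSq (u + (starRingEnd ℂ) w) := by
    rw [my_normSq_sub]; nlinarith [Complex.normSq_nonneg (u + (starRingEnd ℂ) w)]
  have := Complex.sq_norm (u - w)
  have := Complex.sq_norm (u + (starRingEnd ℂ) w)
  nlinarith [norm_nonneg (u - w), norm_nonneg (u + (starRingEnd ℂ) w)]

lemma my_strip_exp_neg_re_pos {z : ℂ} (hz : |z.im| < Real.pi / 2) :
    0 < (Complex.exp (-z)).re := by
  rw [Complex.exp_re]
  have h := abs_lt.mp hz
  have : 0 < Real.cos (-z).im := by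
    rw [Complex.neg_im, Real.cos_neg]
    exact Real.cos_pos_of_mem_Ioo ⟨by linarith, h.2⟩
  exact mul_pos (Real.exp_pos _) this

lemma my_re_pos_ne {u : ℂ} (h : 0 < u.re) : u ≠ 0 := by
  intro h0; rw [h0] at h; simp at h

/-- Schwarz–Pick for the strip, via the map `z ↦ e^{-z}` to the right half-plane. -/
lemma my_schwarz_pick (f : ℂ → ℂ)
    (hmap : Set.MapsTo f {z : ℂ | |z.im| < Real.pi / 2} {z : ℂ | |z.im| < Real.pi / 2})
    (hdiff : DifferentiableOn ℂ f {z : ℂ | |z.im| < Real.pi / 2})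
    {v z : ℂ} (hv : |v.im| < Real.pi / 2) (hz : |z.im| < Real.pi / 2) :
    ‖Complex.exp (-f z) - Complex.exp (-f v)‖ *
      ‖Complex.exp (-z) + (starRingEnd ℂ) (Complex.exp (-v))‖
    ≤ ‖Complex.exp (-z) - Complex.exp (-v)‖ *
      ‖Complex.exp (-f z) + (starRingEnd ℂ) (Complex.exp (-f v))‖ := by
  have hpi : 0 < Real.pi / 2 := by positivity
  set Sπ : Set ℂ := {z : ℂ | |z.im| < Real.pi / 2} with hSπ
  set α : ℂ := Complex.exp (-v) with hαdef
  set β : ℂ := Complex.exp (-f v) with hβdef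
  have hα : 0 < α.re := my_strip_exp_neg_re_pos hv
  have hβ : 0 < β.re := my_strip_exp_neg_re_pos (hmap hv)
  set u : ℂ → ℂ := fun ζ => (α + (starRingEnd ℂ) α * ζ) / (1 - ζ) with hudef
  -- re of u is positive on the ball
  have hone : ∀ ζ : ℂ, ζ ∈ ball (0:ℂ) 1 → (1:ℂ) - ζ ≠ 0 := by
    intro ζ hζ h0
    have : ζ = 1 := by linear_combination -h0
    rw [mem_ball_zero_iff, this] at hζ; simp at hζ
  have hure : ∀ ζ : ℂ, ζ ∈ ball (0:ℂ) 1 → 0 < (u ζ).re := by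
    intro ζ hζ
    have h1 : Complex.normSq ζ < 1 := by
      rw [Complex.normSq_eq_norm_sq]
      have : ‖ζ‖ < 1 := mem_ball_zero_iff.mp hζ
      nlinarith [norm_nonneg ζ]
    have h2 : 0 < Complex.normSq (1 - ζ) := Complex.normSq_pos.mpr (hone ζ hζ)
    have : (u ζ).re = α.re * (1 - Complex.normSq ζ) / Complex.normSq (1 - ζ) := by
      rw [hudef]; simp only []
      rw [my_div_re, my_num_re]
    rw [this]
    exact div_pos (mul_pos hα (by linarith)) h2
  have huz : ∀ ζ : ℂ, ζ ∈ ball (0:ℂ) 1 → u ζ ≠ 0 := fun ζ hζ => my_re_pos_ne (hure ζ hζ)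
  set h : ℂ → ℂ := fun ζ => -Complex.log (u ζ) with hhdef
  have hexp_h : ∀ ζ ∈ ball (0:ℂ) 1, Complex.exp (-(h ζ)) = u ζ := by
    intro ζ hζ
    rw [hhdef]; simp only [neg_neg]
    exact Complex.exp_log (huz ζ hζ)
  have hh_mem : Set.MapsTo h (ball (0:ℂ) 1) Sπ := by
    intro ζ hζ
    have : (h ζ).im = -(Complex.arg (u ζ)) := by
      rw [hhdef]; simp [Complex.log_im]
    rw [hSπ, mem_setOf_eq, this, abs_neg]
    exact Complex.abs_arg_lt_pi_div_two_iff.mpr (Or.inl (hure ζ hζ))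
  have hu_diff : ∀ ζ ∈ ball (0:ℂ) 1, DifferentiableAt ℂ u ζ := by
    intro ζ hζ
    exact ((differentiableAt_const α).add
      ((differentiableAt_const _).mul differentiableAt_id)).div
      ((differentiableAt_const 1).sub differentiableAt_id) (hone ζ hζ)
  have hh_diff : ∀ ζ ∈ ball (0:ℂ) 1, DifferentiableAt ℂ h ζ := by
    intro ζ hζ
    have hlog : DifferentiableAt ℂ Complex.log (u ζ) :=
      Complex.differentiableAt_log (Complex.mem_slitPlane_iff.mpr (Or.inl (hure ζ hζ)))
    exact (hlog.comp ζ (hu_diff ζ hζ)).neg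
  set w : ℂ → ℂ := fun ζ => Complex.exp (-(f (h ζ))) with hwdef
  have hw_re : ∀ ζ ∈ ball (0:ℂ) 1, 0 < (w ζ).re := by
    intro ζ hζ
    exact my_strip_exp_neg_re_pos (hmap (hh_mem hζ))
  have hden : ∀ ζ ∈ ball (0:ℂ) 1, w ζ + (starRingEnd ℂ) β ≠ 0 := by
    intro ζ hζ
    apply my_re_pos_ne
    rw [Complex.add_re, Complex.conj_re]
    have := hw_re ζ hζ
    linarith
  set ψ : ℂ → ℂ := fun ζ => (w ζ - β) / (w ζ + (starRingEnd ℂ) β) with hψdef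
  have hSopen : IsOpen Sπ := by
    have : Sπ = (fun z : ℂ => |z.im|) ⁻¹' (Iio (Real.pi / 2)) := rfl
    rw [this]
    exact (continuous_abs.comp Complex.continuous_im).isOpen_preimage _ isOpen_Iio
  have hw_diff : ∀ ζ ∈ ball (0:ℂ) 1, DifferentiableAt ℂ w ζ := by
    intro ζ hζ
    have hf : DifferentiableAt ℂ f (h ζ) :=
      (hdiff _ (hh_mem hζ)).differentiableAt (hSopen.mem_nhds (hh_mem hζ))
    exact (Complex.differentiable_exp _).comp ζ ((hf.comp ζ (hh_diff ζ hζ)).neg)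
  have hψ_diff : DifferentiableOn ℂ ψ (ball (0:ℂ) 1) := by
    intro ζ hζ
    exact (((hw_diff ζ hζ).sub (differentiableAt_const β)).div
      ((hw_diff ζ hζ).add (differentiableAt_const _)) (hden ζ hζ)).differentiableWithinAt
  have hψ_maps : Set.MapsTo ψ (ball (0:ℂ) 1) (ball (0:ℂ) 1) := by
    intro ζ hζ
    rw [mem_ball_zero_iff, hψdef]
    simp only []
    rw [norm_div]
    rw [div_lt_one (by
      have := hden ζ hζ
      exact norm_pos_iff.mpr this)]
    exact my_abs_lt (hw_re ζ hζ) hβ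
  have hlogα : Complex.log α = -v := by
    rw [hαdef]
    apply Complex.log_exp
    · rw [Complex.neg_im]
      have := abs_lt.mp hv
      have hpi2 : Real.pi / 2 < Real.pi := by linarith [Real.pi_pos]
      linarith
    · rw [Complex.neg_im]
      have := abs_lt.mp hv
      have hpi2 : Real.pi / 2 < Real.pi := by linarith [Real.pi_pos]
      linarith
  have hu0 : u 0 = α := by rw [hudef]; simp
  have hh0 : h 0 = v := by rw [hhdef]; simp only [hu0, hlogα, neg_neg]
  have hψ0 : ψ 0 = 0 := by
    rw [hψdef]; simp only [hwdef, hh0, ← hβdef, sub_self, zero_div]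
  -- the point ζ0
  set B : ℂ := Complex.exp (-z) with hBdef
  have hB : 0 < B.re := my_strip_exp_neg_re_pos hz
  set ζ0 : ℂ := (B - α) / (B + (starRingEnd ℂ) α) with hζ0def
  have hBden : B + (starRingEnd ℂ) α ≠ 0 := by
    apply my_re_pos_ne; rw [Complex.add_re, Complex.conj_re]; linarith
  have hζ0abs : ‖ζ0‖ < 1 := by
    rw [hζ0def, norm_div, div_lt_one (norm_pos_iff.mpr hBden)]
    exact my_abs_lt hB hα
  have hζ0ball : ζ0 ∈ ball (0:ℂ) 1 := mem_ball_zero_iff.mpr hζ0abs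
  have hsum : α + (starRingEnd ℂ) α ≠ 0 := by
    apply my_re_pos_ne; rw [Complex.add_re, Complex.conj_re]; linarith
  have hone0 : (1:ℂ) - ζ0 ≠ 0 := hone ζ0 hζ0ball
  have huζ0 : u ζ0 = B := by
    rw [hudef]; simp only []
    rw [hζ0def] at hone0 ⊢
    field_simp [hsum] at hone0 ⊢
    linear_combination B * mul_inv_cancel₀ hsum
  have hhζ0 : h ζ0 = z := by
    rw [hhdef]; simp only [huζ0, hBdef]
    rw [Complex.log_exp]
    · ring
    · rw [Complex.neg_im]
      have := abs_lt.mp hz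
      have hpi2 : Real.pi / 2 < Real.pi := by linarith [Real.pi_pos]
      linarith
    · rw [Complex.neg_im]
      have := abs_lt.mp hz
      have hpi2 : Real.pi / 2 < Real.pi := by linarith [Real.pi_pos]
      linarith
  -- Schwarz lemma
  have hSch := Complex.norm_le_norm_of_mapsTo_ball hψ_diff (hψ_maps.mono_right ball_subset_closedBall) hψ0 hζ0abs
  have hwζ0 : w ζ0 = Complex.exp (-(f z)) := by rw [hwdef]; simp only [hhζ0]
  rw [hψdef] at hSch
  simp only [hwζ0] at hSch
  rw [hζ0def] at hSch
  rw [norm_div, norm_div] at hSch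
  have hX : 0 < (Complex.exp (-(f z))).re := my_strip_exp_neg_re_pos (hmap hz)
  have hXden : Complex.exp (-(f z)) + (starRingEnd ℂ) β ≠ 0 := by
    apply my_re_pos_ne; rw [Complex.add_re, Complex.conj_re]; linarith
  rw [div_le_div_iff₀ (norm_pos_iff.mpr hXden) (norm_pos_iff.mpr hBden)] at hSch
  convert hSch using 2 <;> simp [hαdef, hβdef, hBdef]

/-- Julia-type inequality: the function `Re (exp ·)` increases along the semigroup. -/
lemma my_julia (F : ℝ → ℂ → ℂ)
    (hsg : IsHoloSemigroupOn {z : ℂ | |z.im| < Real.pi / 2} F)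
    {z : ℂ} (hz : |z.im| < Real.pi / 2)
    (hre : Tendsto (fun s : ℝ => (F s z).re) atTop atTop)
    {t : ℝ} (ht : 0 < t) :
    (Complex.exp z).re ≤ (Complex.exp (F t z)).re := by
  have hzS : z ∈ {z : ℂ | |z.im| < Real.pi / 2} := hz
  obtain ⟨hFt_maps, hFt_diff⟩ := hsg.1 t ht.le
  set zn : ℕ → ℂ := fun n => F ((n : ℝ) * t) z with hzndef
  have hzn : ∀ n, zn n ∈ {z : ℂ | |z.im| < Real.pi / 2} := by
    intro n
    exact (hsg.1 ((n : ℝ) * t) (by positivity)).1 hzS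
  have hrec : ∀ n, F t (zn n) = zn (n + 1) := by
    intro n
    have h := hsg.2.2.1 t ((n : ℝ) * t) ht.le (by positivity) z hzS
    rw [hzndef]
    simp only []
    rw [← h]
    congr 1
    push_cast
    ring
  set b : ℕ → ℂ := fun n => Complex.exp (-(zn n)) with hbdef
  have hbre : ∀ n, 0 < (b n).re := fun n => my_strip_exp_neg_re_pos (hzn n)
  have hb0 : Tendsto b atTop (𝓝 0) := by
    rw [tendsto_zero_iff_norm_tendsto_zero]
    have h1 : Tendsto (fun n : ℕ => (zn n).re) atTop atTop :=
      hre.comp ((tendsto_natCast_atTop_atTop (R := ℝ)).atTop_mul_const ht)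
    have h2 : ∀ n, ‖b n‖ = Real.exp (-(zn n).re) := by
      intro n
      rw [hbdef]
      simp only []
      rw [Complex.norm_exp]
      simp
    simp only [h2]
    exact Real.tendsto_exp_atBot.comp (tendsto_neg_atBot_iff.mpr h1)
  have hbre0 : Tendsto (fun n => (b n).re) atTop (𝓝 0) := by
    have := (Complex.continuous_re.tendsto 0).comp hb0
    exact this
  set A : ℂ := Complex.exp (-(F t z)) with hAdef
  set B : ℂ := Complex.exp (-z) with hBdef
  have hA : 0 < A.re := my_strip_exp_neg_re_pos (hFt_maps hzS)
  have hB : 0 < B.re := my_strip_exp_neg_re_pos hz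
  have hkey : ∀ n, B.re * (b n).re * Complex.normSq (A + (starRingEnd ℂ) (b (n + 1)))
      ≤ A.re * (b (n + 1)).re * Complex.normSq (B + (starRingEnd ℂ) (b n)) := by
    intro n
    have hsp := my_schwarz_pick (F t) hFt_maps hFt_diff (hzn n) hz
    rw [hrec n] at hsp
    have hsp' : ‖A - b (n + 1)‖ * ‖B + (starRingEnd ℂ) (b n)‖
        ≤ ‖B - b n‖ * ‖A + (starRingEnd ℂ) (b (n + 1))‖ := hsp
    have h1 := pow_le_pow_left₀ (by positivity) hsp' 2
    rw [mul_pow, mul_pow, Complex.sq_norm, Complex.sq_norm, Complex.sq_norm, Complex.sq_norm] at h1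
    rw [my_normSq_sub A (b (n + 1)), my_normSq_sub B (b n)] at h1
    nlinarith [h1]
  have hfreq : ∀ ε : ℝ, 0 < ε → ∃ᶠ n in atTop, (1 - ε) * (b (n + 1)).re ≤ (b n).re := by
    intro ε hε
    rcases le_or_gt 1 ε with h1 | h1
    · apply Filter.Eventually.frequently
      filter_upwards with n
      have h2 : (1 - ε) * (b (n + 1)).re ≤ 0 :=
        mul_nonpos_of_nonpos_of_nonneg (by linarith) (hbre (n + 1)).le
      linarith [hbre n]
    · by_contra hcon
      rw [Filter.not_frequently] at hcon
      rw [eventually_atTop] at hcon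
      obtain ⟨N, hN⟩ := hcon
      have hmono : ∀ k, (b N).re ≤ (b (N + k)).re := by
        intro k
        induction k with
        | zero => simp
        | succ k ih =>
          have h2 := hN (N + k) (Nat.le_add_right N k)
          push_neg at h2
          have h3 : (b (N + k)).re < (b (N + k + 1)).re := by
            nlinarith [hbre (N + k + 1)]
          have : N + (k + 1) = N + k + 1 := by ring
          rw [this]
          linarith
      have hev := hbre0.eventually_lt_const (hbre N)
      obtain ⟨n, hn_ge, hn_lt⟩ := ((eventually_ge_atTop N).and hev).exists
      obtain ⟨k, rfl⟩ := Nat.exists_eq_add_of_le hn_ge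
      linarith [hmono k]
  have hb1 : Tendsto (fun n => b (n + 1)) atTop (𝓝 0) := hb0.comp (tendsto_add_atTop_nat 1)
  have hPQ : Tendsto (fun n => Complex.normSq (A + (starRingEnd ℂ) (b (n + 1)))) atTop
      (𝓝 (Complex.normSq A)) := by
    have h1 : Tendsto (fun n => A + (starRingEnd ℂ) (b (n + 1))) atTop (𝓝 (A + 0)) := by
      apply tendsto_const_nhds.add
      have := (Complex.continuous_conj.tendsto 0).comp hb1
      simpa [Function.comp_def] using this
    rw [add_zero] at h1
    exact (Complex.continuous_normSq.tendsto A).comp h1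
  have hQ : Tendsto (fun n => Complex.normSq (B + (starRingEnd ℂ) (b n))) atTop
      (𝓝 (Complex.normSq B)) := by
    have h1 : Tendsto (fun n => B + (starRingEnd ℂ) (b n)) atTop (𝓝 (B + 0)) := by
      apply tendsto_const_nhds.add
      have := (Complex.continuous_conj.tendsto 0).comp hb0
      simpa [Function.comp_def] using this
    rw [add_zero] at h1
    exact (Complex.continuous_normSq.tendsto B).comp h1
  have hmain : ∀ ε : ℝ, 0 < ε →
      (1 - ε) * B.re * Complex.normSq A ≤ A.re * Complex.normSq B := by
    intro ε hε
    have hfr : ∃ᶠ n in atTop,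
        (1 - ε) * B.re * Complex.normSq (A + (starRingEnd ℂ) (b (n + 1)))
        ≤ A.re * Complex.normSq (B + (starRingEnd ℂ) (b n)) := by
      apply (hfreq ε hε).mono
      intro n hn
      have hk := hkey n
      have hP : 0 ≤ Complex.normSq (A + (starRingEnd ℂ) (b (n + 1))) := Complex.normSq_nonneg _
      have hbp := hbre (n + 1)
      have h6 : (1 - ε) * (b (n + 1)).re *
            (B.re * Complex.normSq (A + (starRingEnd ℂ) (b (n + 1))))
          ≤ (b n).re * (B.re * Complex.normSq (A + (starRingEnd ℂ) (b (n + 1)))) :=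
        mul_le_mul_of_nonneg_right hn (by positivity)
      have h7 : ((1 - ε) * B.re * Complex.normSq (A + (starRingEnd ℂ) (b (n + 1))))
            * (b (n + 1)).re
          ≤ (A.re * Complex.normSq (B + (starRingEnd ℂ) (b n))) * (b (n + 1)).re := by
        nlinarith [hk, h6]
      exact le_of_mul_le_mul_right h7 hbp
    have hL : Tendsto (fun n => (1 - ε) * B.re *
        Complex.normSq (A + (starRingEnd ℂ) (b (n + 1)))) atTop
        (𝓝 ((1 - ε) * B.re * Complex.normSq A)) := hPQ.const_mul _
    have hR : Tendsto (fun n => A.re * Complex.normSq (B + (starRingEnd ℂ) (b n))) atTop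
        (𝓝 (A.re * Complex.normSq B)) := hQ.const_mul _
    by_contra hcon
    push_neg at hcon
    have hev := hR.eventually_lt hL hcon
    obtain ⟨n, h7, h8⟩ := (hfr.and_eventually hev).exists
    exact absurd h7 (not_le.mpr h8)
  have hfin : B.re * Complex.normSq A ≤ A.re * Complex.normSq B := by
    by_contra hlt
    push_neg at hlt
    set x : ℝ := B.re * Complex.normSq A with hxdef
    set y : ℝ := A.re * Complex.normSq B with hydef
    have hxpos : 0 < x := mul_pos hB (Complex.normSq_pos.mpr (my_re_pos_ne hA))
    have hεpos : 0 < (x - y) / (2 * x) := by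
      apply div_pos (by linarith) (by linarith)
    have h9 := hmain ((x - y) / (2 * x)) hεpos
    have h10 : (1 - (x - y) / (2 * x)) * B.re * Complex.normSq A = (x + y) / 2 := by
      rw [show (1 - (x - y) / (2 * x)) * B.re * Complex.normSq A
          = (1 - (x - y) / (2 * x)) * x by rw [hxdef]; ring]
      field_simp
      ring
    rw [h10] at h9
    linarith
  have hez : Complex.exp z = B⁻¹ := by
    rw [hBdef, Complex.exp_neg, inv_inv]
  have heA : Complex.exp (F t z) = A⁻¹ := by
    rw [hAdef, Complex.exp_neg, inv_inv]
  rw [hez, heA, Complex.inv_re, Complex.inv_re]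
  rw [div_le_div_iff₀ (Complex.normSq_pos.mpr (my_re_pos_ne hB))
    (Complex.normSq_pos.mpr (my_re_pos_ne hA))]
  exact hfin


def my_phi : ℂ → ℂ := fun u => if u = 0 then 1 else (Complex.exp u - 1) / u

lemma my_phi_eq (u : ℂ) : Complex.exp u - 1 = u * my_phi u := by
  unfold my_phi
  by_cases h : u = 0
  · simp [h]
  · rw [if_neg h]
    field_simp

lemma my_phi_tendsto : Tendsto my_phi (𝓝 0) (𝓝 1) := by
  have h1 : HasDerivAt Complex.exp 1 0 := by simpa using Complex.hasDerivAt_exp 0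
  rw [hasDerivAt_iff_tendsto_slope] at h1
  have h2 : Tendsto my_phi (𝓝[≠] (0:ℂ)) (𝓝 1) := by
    apply Filter.Tendsto.congr' _ h1
    filter_upwards [self_mem_nhdsWithin] with u hu
    have hu' : u ≠ 0 := hu
    rw [slope_def_field]
    unfold my_phi
    rw [if_neg hu']
    simp [Complex.exp_zero]
  have h3 : Tendsto my_phi (pure (0:ℂ)) (𝓝 1) := by
    have h0 : my_phi 0 = 1 := by unfold my_phi; simp
    have := tendsto_pure_nhds my_phi 0
    rwa [h0] at this
  rw [← nhdsNE_sup_pure (0:ℂ)]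
  exact Filter.Tendsto.sup h2 h3


/-- If the Denjoy–Wolff point of a semigroup on the standard strip
is the prime end `+∞`, then the generator has the form `G(z) = e^{-z} q(z)` with `Re q ≥ 0`. -/
theorem generator_form_on_strip_DW_plus_infinity
    (S : Set ℂ) (hS : S = {z : ℂ | |z.im| < Real.pi / 2})
    (F : ℝ → ℂ → ℂ) (G : ℂ → ℂ) (hFG : IsGeneratorOf S F G)
    (hDW : ∀ K : Set ℂ, K ⊆ S → IsCompact K → ∀ M : ℝ,
      ∀ᶠ t in Filter.atTop, ∀ z ∈ K, M ≤ (F t z).re) :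
    ∃ q : ℂ → ℂ, DifferentiableOn ℂ q S ∧ (∀ z ∈ S, 0 ≤ (q z).re) ∧
      ∀ z ∈ S, G z = Complex.exp (-z) * q z := by
  obtain ⟨hsg, hTLU⟩ := hFG
  have hSopen : IsOpen S := by
    rw [hS]
    exact (continuous_abs.comp Complex.continuous_im).isOpen_preimage _ isOpen_Iio
  have hGdiff : DifferentiableOn ℂ G S := by
    apply hTLU.differentiableOn _ hSopen
    filter_upwards [self_mem_nhdsWithin] with t ht
    exact ((hsg.1 t (le_of_lt ht)).2.sub differentiableOn_id).const_smul _
  refine ⟨fun z => Complex.exp z * G z, ?_, ?_, ?_⟩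
  · exact (Complex.differentiable_exp.differentiableOn).mul hGdiff
  · intro z hz
    have hz' : |z.im| < Real.pi / 2 := by rwa [hS] at hz
    have hpt : Tendsto (fun t : ℝ => t⁻¹ • (F t z - z)) (𝓝[>] 0) (𝓝 (G z)) :=
      hTLU.tendsto_at hz
    have hre : Tendsto (fun s : ℝ => (F s z).re) atTop atTop := by
      rw [Filter.tendsto_atTop]
      intro M
      filter_upwards [hDW {z} (singleton_subset_iff.mpr hz) isCompact_singleton M] with s hs
      exact hs z rfl
    have hFz : Tendsto (fun t : ℝ => F t z - z) (𝓝[>] 0) (𝓝 0) := by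
      have h1 : Tendsto (fun t : ℝ => t • (t⁻¹ • (F t z - z))) (𝓝[>] (0:ℝ))
          (𝓝 ((0:ℝ) • G z)) :=
        Filter.Tendsto.smul (tendsto_id.mono_left nhdsWithin_le_nhds) hpt
      rw [zero_smul] at h1
      apply h1.congr'
      filter_upwards [self_mem_nhdsWithin] with t ht
      rw [smul_smul, mul_inv_cancel₀ (ne_of_gt ht), one_smul]
    have hΦ : Tendsto (fun t : ℝ => my_phi (F t z - z)) (𝓝[>] (0:ℝ)) (𝓝 1) :=
      my_phi_tendsto.comp hFz
    have heq : ∀ t : ℝ, t⁻¹ • (Complex.exp (F t z) - Complex.exp z)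
        = Complex.exp z * my_phi (F t z - z) * (t⁻¹ • (F t z - z)) := by
      intro t
      have h2 : Complex.exp (F t z) - Complex.exp z
          = Complex.exp z * ((F t z - z) * my_phi (F t z - z)) := by
        rw [← my_phi_eq, mul_sub, ← Complex.exp_add, mul_one]
        congr 2
        ring
      rw [h2, Complex.real_smul, Complex.real_smul]
      ring
    have hexp : Tendsto (fun t : ℝ => t⁻¹ • (Complex.exp (F t z) - Complex.exp z))
        (𝓝[>] (0:ℝ)) (𝓝 (Complex.exp z * G z)) := by
      have h3 : Tendsto (fun t : ℝ => Complex.exp z * my_phi (F t z - z)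
          * (t⁻¹ • (F t z - z))) (𝓝[>] (0:ℝ)) (𝓝 (Complex.exp z * 1 * G z)) :=
        (Filter.Tendsto.mul tendsto_const_nhds hΦ).mul hpt
      rw [mul_one] at h3
      exact h3.congr (fun t => (heq t).symm)
    have hjulia : ∀ᶠ t in 𝓝[>] (0:ℝ),
        0 ≤ ((fun t : ℝ => t⁻¹ • (Complex.exp (F t z) - Complex.exp z)) t).re := by
      filter_upwards [self_mem_nhdsWithin] with t ht
      have hj := my_julia F (hS ▸ hsg) hz' hre ht
      simp only [Complex.smul_re, Complex.sub_re]
      have : (0:ℝ) ≤ t⁻¹ := inv_nonneg.mpr (le_of_lt ht)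
      have h4 : 0 ≤ (Complex.exp (F t z)).re - (Complex.exp z).re := by linarith
      positivity
    exact ge_of_tendsto ((Complex.continuous_re.tendsto _).comp hexp) hjulia
  · intro z hz
    rw [show Complex.exp (-z) * (Complex.exp z * G z)
        = (Complex.exp (-z) * Complex.exp z) * G z from by ring, ← Complex.exp_add,
      neg_add_cancel, Complex.exp_zero, one_mul]
end
end

section
/- Let D ⊆ ℂⁿ be a bounded convex domain, let G be an infinitesimal generator on D, and let (J_t)_{t≥0} be the nonlinear resolvents of G. Then the images J_t(D) contract exactly to the zero set of G: ⋂_{t≥0} J_t(D) = {z ∈ D : G(z) = 0} (this set may be empty). -/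
open Filter MeasureTheory Set Metric

noncomputable section

variable {E : Type*} [NormedAddCommGroup E] [NormedSpace ℂ E]

namespace ResolventAux

variable {E : Type*} [NormedAddCommGroup E] [NormedSpace ℂ E]

/-- The admissible chain values between `u` and `v` through analytic discs in `D`,
with all disc parameters at most `1/2`. -/
def chainVals (D : Set E) (u v : E) : Set ℝ :=
  {S | ∃ (N : ℕ) (p : ℕ → E) (φ : ℕ → ℂ → E) (σ : ℕ → ℝ),
    p 0 = u ∧ p N = v ∧
    (∀ i < N, DifferentiableOn ℂ (φ i) (ball (0:ℂ) 1) ∧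
      Set.MapsTo (φ i) (ball (0:ℂ) 1) D ∧
      0 ≤ σ i ∧ σ i ≤ 1/2 ∧ φ i 0 = p i ∧ φ i ((σ i : ℝ) : ℂ) = p (i+1)) ∧
    S = ∑ i ∈ Finset.range N, σ i}

/-- A Kobayashi-type pseudo-distance. -/
def kdist (D : Set E) (u v : E) : ℝ := sInf (chainVals D u v)

lemma nonneg_of_mem_chainVals {D : Set E} {u v : E} {S : ℝ} (hS : S ∈ chainVals D u v) :
    0 ≤ S := by
  obtain ⟨N, p, φ, σ, -, -, hc, rfl⟩ := hS
  exact Finset.sum_nonneg fun i hi => (hc i (Finset.mem_range.mp hi)).2.2.1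

lemma bddBelow_chainVals (D : Set E) (u v : E) : BddBelow (chainVals D u v) :=
  ⟨0, fun _ hS => nonneg_of_mem_chainVals hS⟩

lemma kdist_nonneg (D : Set E) (u v : E) : 0 ≤ kdist D u v :=
  Real.sInf_nonneg fun _ hS => nonneg_of_mem_chainVals hS

lemma chainVals_nonempty {D : Set E} (hDo : IsOpen D) (hDc : Convex ℝ D)
    {u v : E} (hu : u ∈ D) (hv : v ∈ D) : (chainVals D u v).Nonempty := by
  have hcpt : IsCompact (segment ℝ u v) := by
    rw [segment_eq_image']
    exact isCompact_Icc.image (by continuity)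
  obtain ⟨δ, hδ, hthick⟩ :=
    hcpt.exists_thickening_subset_open hDo (hDc.segment_subset hu hv)
  set N : ℕ := ⌈2 * ‖v - u‖ / δ⌉₊ + 1 with hNdef
  have hN0 : (0:ℝ) < N := by positivity
  have hNgt : 2 * ‖v - u‖ / δ < N := by
    have := Nat.le_ceil (2 * ‖v - u‖ / δ)
    have : (⌈2 * ‖v - u‖ / δ⌉₊ : ℝ) < N := by
      rw [hNdef]; push_cast; linarith
    linarith [Nat.le_ceil (2 * ‖v - u‖ / δ)]
  set d : E := (2 / (N:ℝ)) • (v - u) with hd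
  have hdnorm : ‖d‖ < δ := by
    rw [hd, norm_smul, Real.norm_eq_abs, abs_of_nonneg (by positivity)]
    rw [div_lt_iff₀ hδ] at hNgt
    rw [div_mul_eq_mul_div, div_lt_iff₀ hN0]
    nlinarith
  set p : ℕ → E := fun i => u + ((i:ℝ) / N) • (v - u) with hp
  refine ⟨∑ i ∈ Finset.range N, (1/2 : ℝ), N, p, fun i ζ => p i + ζ • d, fun _ => 1/2,
    ?_, ?_, ?_, rfl⟩
  · simp [hp]
  · have : ((N:ℝ) / N) = 1 := div_self (ne_of_gt hN0)
    simp [hp, this]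
  · intro i hi
    have hpiD : p i ∈ segment ℝ u v := by
      rw [segment_eq_image']
      exact ⟨(i:ℝ)/N, ⟨by positivity, by
        rw [div_le_one hN0]; exact_mod_cast hi.le⟩, rfl⟩
    refine ⟨?_, ?_, by norm_num, le_refl _, by simp, ?_⟩
    · exact ((differentiable_id.smul_const d).const_add (p i)).differentiableOn
    · intro ζ hζ
      have : p i + ζ • d ∈ ball (p i) δ := by
        rw [mem_ball, dist_eq_norm, add_sub_cancel_left, norm_smul]
        calc ‖ζ‖ * ‖d‖ ≤ 1 * ‖d‖ := by
              apply mul_le_mul_of_nonneg_right _ (norm_nonneg d)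
              have := mem_ball_zero_iff.mp hζ
              simpa using this.le
          _ < δ := by simpa using hdnorm
      exact hthick (ball_subset_thickening hpiD δ this)
    · show p i + (((1/2 : ℝ) : ℂ)) • d = p (i + 1)
      rw [Complex.coe_smul, hd, smul_smul, hp]
      have h1 : (1/2 : ℝ) * (2 / N) = 1 / N := by ring
      rw [h1]
      show u + ((i:ℝ)/N) • (v-u) + ((1:ℝ)/N) • (v-u) = u + (((i+1:ℕ):ℝ)/N) • (v-u)
      have h2 : (((i+1:ℕ):ℝ))/N = (i:ℝ)/N + 1/N := by push_cast; ring
      rw [h2, add_smul]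
      abel

lemma dist_le_of_mem_chainVals {D : Set E} {R : ℝ} (hR : D ⊆ ball (0:E) R)
    {u v : E} {S : ℝ} (hS : S ∈ chainVals D u v) : dist u v ≤ 2 * R * S := by
  obtain ⟨N, p, φ, σ, h0, hN, hc, rfl⟩ := hS
  have key : ∀ i < N, dist (p i) (p (i+1)) ≤ 2 * R * σ i := by
    intro i hi
    obtain ⟨hdiff, hmaps, hσ0, hσh, hφ0, hφσ⟩ := hc i hi
    have h0mem : (0:ℂ) ∈ ball (0:ℂ) 1 := by simp
    have hmaps2 : Set.MapsTo (φ i) (ball (0:ℂ) 1) (ball (φ i 0) (2*R)) := by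
      intro ξ hξ
      have h1 : φ i ξ ∈ ball (0:E) R := hR (hmaps hξ)
      have h2 : φ i 0 ∈ ball (0:E) R := hR (hmaps h0mem)
      rw [mem_ball] at h1 h2 ⊢
      calc dist (φ i ξ) (φ i 0) ≤ dist (φ i ξ) 0 + dist (φ i 0) 0 := dist_triangle_right _ _ _
        _ < R + R := add_lt_add h1 h2
        _ = 2 * R := by ring
    have hσmem : ((σ i : ℝ) : ℂ) ∈ ball (0:ℂ) 1 := by
      rw [mem_ball_zero_iff]
      simp only [Complex.norm_real, Real.norm_eq_abs, abs_of_nonneg hσ0]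
      linarith
    have := Complex.dist_le_div_mul_dist_of_mapsTo_ball hdiff (hmaps2.mono_right ball_subset_closedBall) hσmem
    rw [hφ0, hφσ] at this
    calc dist (p i) (p (i+1)) = dist (p (i+1)) (p i) := dist_comm _ _
      _ ≤ 2 * R / 1 * dist ((σ i : ℝ) : ℂ) 0 := this
      _ = 2 * R * σ i := by
          rw [Complex.dist_eq]
          simp [Complex.norm_real, abs_of_nonneg hσ0]
  calc dist u v = dist (p 0) (p N) := by rw [h0, hN]
    _ ≤ ∑ i ∈ Finset.range N, dist (p i) (p (i+1)) := dist_le_range_sum_dist p N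
    _ ≤ ∑ i ∈ Finset.range N, 2 * R * σ i :=
        Finset.sum_le_sum fun i hi => key i (Finset.mem_range.mp hi)
    _ = 2 * R * ∑ i ∈ Finset.range N, σ i := by rw [Finset.mul_sum]

lemma dist_le_kdist {D : Set E} {R : ℝ} (hR : D ⊆ ball (0:E) R) (hRpos : 0 < R)
    {u v : E} (hne : (chainVals D u v).Nonempty) : dist u v ≤ 2 * R * kdist D u v := by
  have h2R : (0:ℝ) < 2 * R := by linarith
  have : dist u v / (2 * R) ≤ kdist D u v := by
    apply le_csInf hne
    intro S hS
    rw [div_le_iff₀ h2R]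
    calc dist u v ≤ 2 * R * S := dist_le_of_mem_chainVals hR hS
      _ = S * (2 * R) := by ring
  calc dist u v = dist u v / (2*R) * (2*R) := by field_simp
    _ ≤ kdist D u v * (2*R) := by
        exact mul_le_mul_of_nonneg_right this h2R.le
    _ = 2 * R * kdist D u v := by ring

lemma kdist_le_dist_div {D : Set E} {u v : E} {r : ℝ} (hball : ball u r ⊆ D) (hr : 0 < r)
    (hclose : dist u v ≤ r / 2) : kdist D u v ≤ dist u v / r := by
  rcases eq_or_ne v u with rfl | hne
  · have h0 : (0:ℝ) ∈ chainVals D v v :=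
      ⟨0, fun _ => v, fun _ _ => v, fun _ => 0, rfl, rfl, by omega, by simp⟩
    have := csInf_le (bddBelow_chainVals D v v) h0
    simpa [dist_self, kdist] using this.trans (by positivity)
  · have hd0 : (0:ℝ) < dist u v := dist_pos.mpr (Ne.symm hne)
    set c : E := (r / dist u v) • (v - u) with hc
    have hcnorm : ‖c‖ = r := by
      rw [hc, norm_smul, Real.norm_eq_abs, abs_of_nonneg (by positivity)]
      rw [dist_eq_norm'] at hd0 ⊢
      field_simp
    have hmem : dist u v / r ∈ chainVals D u v := by
      refine ⟨1, fun i => if i = 0 then u else v, fun _ ζ => u + ζ • c,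
        fun _ => dist u v / r, by simp, by simp, ?_, by simp⟩
      intro i hi
      interval_cases i
      refine ⟨((differentiable_id.smul_const c).const_add u).differentiableOn, ?_, by positivity,
        ?_, by simp, ?_⟩
      · intro ζ hζ
        apply hball
        rw [mem_ball, dist_eq_norm, add_sub_cancel_left, norm_smul, hcnorm]
        have := mem_ball_zero_iff.mp hζ
        calc ‖ζ‖ * r < 1 * r := by
              exact mul_lt_mul_of_pos_right (by simpa using this) hr
          _ = r := one_mul r
      · show dist u v / r ≤ 1/2
        rw [div_le_div_iff₀ hr (by norm_num : (0:ℝ) < 2)]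
        linarith
      · show u + ((dist u v / r : ℝ) : ℂ) • c = if 1 = 0 then u else v
        rw [if_neg one_ne_zero, Complex.coe_smul, hc, smul_smul]
        have : dist u v / r * (r / dist u v) = 1 := by field_simp
        rw [this, one_smul]
        abel
    exact csInf_le (bddBelow_chainVals D u v) hmem

lemma add_mem_chainVals {D : Set E} {u v w : E} {S₁ S₂ : ℝ}
    (h1 : S₁ ∈ chainVals D u v) (h2 : S₂ ∈ chainVals D v w) :
    S₁ + S₂ ∈ chainVals D u w := by
  obtain ⟨N₁, p₁, φ₁, σ₁, hp₁0, hp₁N, hc₁, rfl⟩ := h1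
  obtain ⟨N₂, p₂, φ₂, σ₂, hp₂0, hp₂N, hc₂, rfl⟩ := h2
  refine ⟨N₁ + N₂,
    fun i => if i < N₁ then p₁ i else p₂ (i - N₁),
    fun i => if i < N₁ then φ₁ i else φ₂ (i - N₁),
    fun i => if i < N₁ then σ₁ i else σ₂ (i - N₁), ?_, ?_, ?_, ?_⟩
  · rcases Nat.eq_zero_or_pos N₁ with h | h
    · dsimp only
      rw [if_neg (by omega)]
      have h2 : (0:ℕ) - N₁ = 0 := by omega
      rw [h2, hp₂0, ← hp₁N, h, hp₁0]
    · dsimp only; rw [if_pos h, hp₁0]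
  · dsimp only
    have : ¬ (N₁ + N₂ < N₁) := by omega
    rw [if_neg this, Nat.add_sub_cancel_left, hp₂N]
  · intro i hi
    dsimp only
    rcases lt_or_ge i N₁ with h | h
    · obtain ⟨ha, hb, hc, hd, he, hf⟩ := hc₁ i h
      refine ⟨by simpa only [if_pos h] using ha, by simpa only [if_pos h] using hb,
        by simpa only [if_pos h] using hc, by simpa only [if_pos h] using hd,
        by simp only [if_pos h]; exact he, ?_⟩
      simp only [if_pos h]
      rw [hf]
      rcases lt_or_ge (i+1) N₁ with h' | h'
      · rw [if_pos h']
      · have : i + 1 = N₁ := by omega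
        rw [if_neg (by omega), this, Nat.sub_self, hp₂0, ← hp₁N]
  -- i ≥ N₁ case
    · have hin : ¬ i < N₁ := by omega
      have hin' : ¬ i + 1 < N₁ := by omega
      have hjlt : i - N₁ < N₂ := by omega
      obtain ⟨ha, hb, hc, hd, he, hf⟩ := hc₂ (i - N₁) hjlt
      have hii' : i + 1 - N₁ = (i - N₁) + 1 := by omega
      refine ⟨by simpa only [if_neg hin] using ha, by simpa only [if_neg hin] using hb,
        by simpa only [if_neg hin] using hc, by simpa only [if_neg hin] using hd,
        by simp only [if_neg hin]; exact he, ?_⟩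
      simp only [if_neg hin, if_neg hin']
      rw [hii', hf]
  · rw [Finset.sum_range_add]
    congr 1
    · apply Finset.sum_congr rfl
      intro i hi
      rw [if_pos (Finset.mem_range.mp hi)]
    · apply Finset.sum_congr rfl
      intro j hj
      rw [if_neg (by omega), Nat.add_sub_cancel_left]

lemma kdist_triangle {D : Set E} (hDo : IsOpen D) (hDc : Convex ℝ D)
    {u v w : E} (hu : u ∈ D) (hv : v ∈ D) (hw : w ∈ D) :
    kdist D u w ≤ kdist D u v + kdist D v w := by
  apply le_of_forall_pos_le_add
  intro ε hε
  obtain ⟨S₁, hS₁, hS₁lt⟩ := Real.lt_sInf_add_pos (chainVals_nonempty hDo hDc hu hv)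
    (show (0:ℝ) < ε/2 by linarith)
  obtain ⟨S₂, hS₂, hS₂lt⟩ := Real.lt_sInf_add_pos (chainVals_nonempty hDo hDc hv hw)
    (show (0:ℝ) < ε/2 by linarith)
  have := csInf_le (bddBelow_chainVals D u w) (add_mem_chainVals hS₁ hS₂)
  unfold kdist at *
  linarith

lemma kdist_comp_le {D D' : Set E} {f : E → E} (hf : DifferentiableOn ℂ f D)
    (hmap : Set.MapsTo f D D') {u v : E} (hne : (chainVals D u v).Nonempty) :
    kdist D' (f u) (f v) ≤ kdist D u v := by
  apply csInf_le_csInf (bddBelow_chainVals D' (f u) (f v)) hne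
  rintro S ⟨N, p, φ, σ, h0, hN, hc, rfl⟩
  refine ⟨N, fun i => f (p i), fun i => f ∘ φ i, σ, congrArg f h0, congrArg f hN, ?_, rfl⟩
  intro i hi
  obtain ⟨ha, hb, hcc, hd, he, hff⟩ := hc i hi
  exact ⟨hf.comp ha hb, hmap.comp hb, hcc, hd, by simp [Function.comp, he],
    by simp [Function.comp, hff]⟩

set_option maxHeartbeats 1600000 in
lemma chainVals_contract {D : Set E} (hDc : Convex ℝ D) {R rz b : ℝ}
    (hR : D ⊆ ball (0:E) R) {w : E} (hw : w ∈ D) (hball : ball w rz ⊆ D) (hrz : 0 < rz)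
    (hb : 0 < b) (hb2 : b ≤ 1/2) (hbrz : b * rz ≤ R) {u v : E} {S : ℝ}
    (hS : S ∈ chainVals D u v) :
    (1 - b*rz/(16*R)) * S ∈ chainVals D (u + b•(w-u)) (v + b•(w-v)) := by
  have hR0 : 0 < R := lt_of_le_of_lt dist_nonneg (mem_ball.mp (hR hw))
  set ε : ℝ := b*rz/(16*R) with hεdef
  have hε0 : 0 < ε := by positivity
  have hε16 : ε ≤ 1/16 := by
    rw [hεdef, div_le_iff₀ (by positivity)]
    nlinarith
  set m : E → E := fun x => x + b • (w - x) with hm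
  have hgap : ∀ x ∈ D, ∀ e : E, ‖e‖ < b * rz → m x + e ∈ D := by
    intro x hx e he
    have h1 : w + b⁻¹ • e ∈ D := by
      apply hball
      rw [mem_ball, dist_eq_norm, add_sub_cancel_left, norm_smul, norm_inv, Real.norm_eq_abs,
        abs_of_pos hb, inv_mul_lt_iff₀ hb]
      linarith
    have h2 := hDc hx h1 (by linarith : (0:ℝ) ≤ 1 - b) hb.le (by ring)
    have h3 : (1-b)•x + b•(w + b⁻¹ • e) = m x + e := by
      rw [smul_add, smul_inv_smul₀ hb.ne']
      simp only [hm]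
      module
    rwa [h3] at h2
  have hmD : Set.MapsTo m D D := by
    intro x hx
    have := hgap x hx 0 (by simpa using (by positivity : (0:ℝ) < b * rz))
    simpa using this
  have hmdiff : Differentiable ℂ m :=
    differentiable_id.add (((differentiable_const w).sub differentiable_id).const_smul b)
  have hmsub : ∀ x y : E, m x - m y = (1-b)•(x-y) := by
    intro x y; simp only [hm]; module
  obtain ⟨N, p, φ, σ, h0, hN, hc, rfl⟩ := hS
  refine ⟨N, fun i => m (p i),
    fun i ζ => if σ i = 0 then m (φ i ζ) else
      m (φ i ζ) + (ζ / (((1-ε) * σ i : ℝ) : ℂ)) • (m (p (i+1)) - m (φ i (((1-ε) * σ i : ℝ) : ℂ))),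
    fun i => (1-ε) * σ i, by dsimp only; rw [h0], by dsimp only; rw [hN], ?_,
    by rw [Finset.mul_sum]⟩
  intro i hi
  obtain ⟨ha, hbmap, hσ0, hσh, hφ0, hφσ⟩ := hc i hi
  dsimp only
  rcases eq_or_ne (σ i) 0 with hz0 | hz0
  · have hpp : p (i+1) = p i := by
      rw [← hφσ, ← hφ0, hz0, Complex.ofReal_zero]
    simp only [if_pos hz0]
    exact ⟨hmdiff.comp_differentiableOn ha, hmD.comp hbmap, by rw [hz0, mul_zero],
      by rw [hz0, mul_zero]; norm_num,
      by rw [hφ0], by rw [hz0, mul_zero, Complex.ofReal_zero, hφ0, hpp]⟩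
  · have hσpos : 0 < σ i := lt_of_le_of_ne hσ0 (Ne.symm hz0)
    have h1ε : (0:ℝ) < 1 - ε := by linarith
    set σ' : ℝ := (1-ε) * σ i with hσ'def
    have hσ'pos : 0 < σ' := by positivity
    have hσ'le : σ' ≤ σ i := by nlinarith
    have hσ'half : σ' ≤ 1/2 := le_trans hσ'le hσh
    have hσ'ne : ((σ' : ℝ) : ℂ) ≠ 0 := Complex.ofReal_ne_zero.mpr hσ'pos.ne'
    have hsub1 : ball ((σ':ℝ):ℂ) (1/2) ⊆ ball (0:ℂ) 1 := by
      apply ball_subset_ball'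
      rw [dist_zero_right, Complex.norm_real, Real.norm_eq_abs, abs_of_pos hσ'pos]
      linarith
    have hd2 : DifferentiableOn ℂ (φ i) (ball ((σ':ℝ):ℂ) (1/2)) := ha.mono hsub1
    have hσ'mem : ((σ':ℝ):ℂ) ∈ ball (0:ℂ) 1 := by
      rw [mem_ball_zero_iff, Complex.norm_real, Real.norm_eq_abs, abs_of_pos hσ'pos]
      linarith
    have hφσ'D : φ i ((σ':ℝ):ℂ) ∈ D := hbmap hσ'mem
    have hmaps2 : Set.MapsTo (φ i) (ball ((σ':ℝ):ℂ) (1/2)) (ball (φ i ((σ':ℝ):ℂ)) (2*R)) := by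
      intro ξ hξ
      have h1 : φ i ξ ∈ ball (0:E) R := hR (hbmap (hsub1 hξ))
      have h2 : φ i ((σ':ℝ):ℂ) ∈ ball (0:E) R := hR hφσ'D
      rw [mem_ball] at h1 h2 ⊢
      calc dist (φ i ξ) (φ i ((σ':ℝ):ℂ))
          ≤ dist (φ i ξ) 0 + dist (φ i ((σ':ℝ):ℂ)) 0 := dist_triangle_right _ _ _
        _ < R + R := add_lt_add h1 h2
        _ = 2*R := by ring
    have hσmem' : ((σ i : ℝ):ℂ) ∈ ball ((σ':ℝ):ℂ) (1/2) := by
      rw [mem_ball, Complex.dist_eq, ← Complex.ofReal_sub, Complex.norm_real, Real.norm_eq_abs]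
      rw [abs_of_nonneg (by nlinarith : (0:ℝ) ≤ σ i - σ')]
      nlinarith
    have hkey : dist (φ i ((σ i:ℝ):ℂ)) (φ i ((σ':ℝ):ℂ)) ≤ 4*R*(ε * σ i) := by
      have := Complex.dist_le_div_mul_dist_of_mapsTo_ball hd2 (hmaps2.mono_right ball_subset_closedBall) hσmem'
      have hd : dist ((σ i:ℝ):ℂ) ((σ':ℝ):ℂ) = ε * σ i := by
        rw [Complex.dist_eq, ← Complex.ofReal_sub, Complex.norm_real, Real.norm_eq_abs,
          abs_of_nonneg (by nlinarith : (0:ℝ) ≤ σ i - σ')]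
        rw [hσ'def]; ring
      rw [hd] at this
      calc dist (φ i ((σ i:ℝ):ℂ)) (φ i ((σ':ℝ):ℂ)) ≤ 2*R/(1/2) * (ε * σ i) := this
        _ = 4*R*(ε*σ i) := by ring
    have hvb : ‖m (p (i+1)) - m (φ i ((σ':ℝ):ℂ))‖ ≤ 4*R*(ε*σ i) := by
      rw [← hφσ, hmsub, norm_smul, Real.norm_eq_abs,
        abs_of_nonneg (by linarith : (0:ℝ) ≤ 1-b), ← dist_eq_norm]
      calc (1-b) * dist (φ i ((σ i:ℝ):ℂ)) (φ i ((σ':ℝ):ℂ))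
          ≤ 1 * dist (φ i ((σ i:ℝ):ℂ)) (φ i ((σ':ℝ):ℂ)) :=
            mul_le_mul_of_nonneg_right (by linarith) dist_nonneg
        _ = dist (φ i ((σ i:ℝ):ℂ)) (φ i ((σ':ℝ):ℂ)) := one_mul _
        _ ≤ 4*R*(ε*σ i) := hkey
    have hbump : ∀ ζ : ℂ, ζ ∈ ball (0:ℂ) 1 →
        ‖(ζ / ((σ':ℝ):ℂ)) • (m (p (i+1)) - m (φ i ((σ':ℝ):ℂ)))‖ < b * rz := by
      intro ζ hζ
      have hζ1 : ‖ζ‖ ≤ 1 := (mem_ball_zero_iff.mp hζ).le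
      rw [norm_smul, norm_div, Complex.norm_real σ', Real.norm_eq_abs,
        abs_of_pos hσ'pos]
      have step1 : ‖ζ‖ / σ' * ‖m (p (i+1)) - m (φ i ((σ':ℝ):ℂ))‖ ≤ (1/σ') * (4*R*(ε*σ i)) := by
        apply mul_le_mul _ hvb (norm_nonneg _) (by positivity)
        gcongr
      have step2 : (1/σ') * (4*R*(ε*σ i)) = 4*R*ε/(1-ε) := by
        rw [hσ'def]; field_simp
      have h4R : 4*R*ε = b*rz/4 := by rw [hεdef]; field_simp; ring
      have step3 : 4*R*ε/(1-ε) < b * rz := by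
        rw [div_lt_iff₀ h1ε, h4R]
        nlinarith [mul_pos hb hrz, hε16, hε0]
      calc ‖ζ‖ / σ' * ‖m (p (i+1)) - m (φ i ((σ':ℝ):ℂ))‖ ≤ (1/σ') * (4*R*(ε*σ i)) := step1
        _ = 4*R*ε/(1-ε) := step2
        _ < b * rz := step3
    simp only [if_neg hz0]
    refine ⟨?_, ?_, by positivity, hσ'half, ?_, ?_⟩
    · exact (hmdiff.comp_differentiableOn ha).add
        (((differentiable_id.div_const _).smul_const _).differentiableOn)
    · intro ζ hζ
      exact hgap _ (hbmap hζ) _ (hbump ζ hζ)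
    · rw [zero_div, zero_smul, add_zero, hφ0]
    · rw [div_self hσ'ne, one_smul, add_sub_cancel]

lemma kdist_contract {D : Set E} (hDc : Convex ℝ D) {R rz b : ℝ}
    (hR : D ⊆ ball (0:E) R) {w : E} (hw : w ∈ D) (hball : ball w rz ⊆ D) (hrz : 0 < rz)
    (hb : 0 < b) (hb2 : b ≤ 1/2) (hbrz : b * rz ≤ R) {u v : E}
    (hne : (chainVals D u v).Nonempty) :
    kdist D (u + b•(w-u)) (v + b•(w-v)) ≤ (1 - b*rz/(16*R)) * kdist D u v := by
  have hR0 : 0 < R := lt_of_le_of_lt dist_nonneg (mem_ball.mp (hR hw))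
  have hε16 : b*rz/(16*R) ≤ 1/16 := by
    rw [div_le_iff₀ (by positivity)]
    nlinarith
  have h1ε : (0:ℝ) < 1 - b*rz/(16*R) := by linarith
  have key : ∀ S ∈ chainVals D u v,
      kdist D (u + b•(w-u)) (v + b•(w-v)) ≤ (1 - b*rz/(16*R)) * S := fun S hS =>
    csInf_le (bddBelow_chainVals D _ _)
      (chainVals_contract hDc hR hw hball hrz hb hb2 hbrz hS)
  have h2 : kdist D (u + b•(w-u)) (v + b•(w-v)) / (1 - b*rz/(16*R)) ≤ kdist D u v := by
    apply le_csInf hne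
    intro S hS
    rw [div_le_iff₀ h1ε]
    calc kdist D (u + b•(w-u)) (v + b•(w-v)) ≤ (1 - b*rz/(16*R)) * S := key S hS
      _ = S * (1 - b*rz/(16*R)) := by ring
  calc kdist D (u + b•(w-u)) (v + b•(w-v))
      = kdist D (u + b•(w-u)) (v + b•(w-v)) / (1 - b*rz/(16*R)) * (1 - b*rz/(16*R)) :=
        (div_mul_cancel₀ _ h1ε.ne').symm
    _ ≤ kdist D u v * (1 - b*rz/(16*R)) := mul_le_mul_of_nonneg_right h2 h1ε.le
    _ = (1 - b*rz/(16*R)) * kdist D u v := by ring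

open scoped Topology in
set_option maxHeartbeats 1600000 in
/-- Uniqueness of solutions of the resolvent equation for an infinitesimal generator
on a bounded convex domain. -/
lemma eq_of_same_resolvent {D : Set E} (hDo : IsOpen D) (hDc : Convex ℝ D)
    {R : ℝ} (hR : D ⊆ ball (0:E) R)
    {F : ℝ → E → E} {G : E → E} (hgen : IsGeneratorOf D F G)
    {t : ℝ} (ht : 0 < t) {x y : E} (hx : x ∈ D) (hy : y ∈ D)
    (hwD : x - t • G x ∈ D) (heq : x - t • G x = y - t • G y) : x = y := by
  obtain ⟨⟨hself, -, -, -⟩, hlim⟩ := hgen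
  have hR0 : 0 < R := lt_of_le_of_lt dist_nonneg (mem_ball.mp (hR hx))
  obtain ⟨rx, hrx0, hrx⟩ := Metric.isOpen_iff.mp hDo x hx
  obtain ⟨ry, hry0, hry⟩ := Metric.isOpen_iff.mp hDo y hy
  obtain ⟨rz0, hrz00, hrz0sub⟩ := Metric.isOpen_iff.mp hDo _ hwD
  set w : E := x - t • G x with hwdef
  set rz : ℝ := min rz0 R with hrzdef
  have hrzpos : 0 < rz := lt_min hrz00 hR0
  have hrzR : rz ≤ R := min_le_right _ _
  have hrzball : ball w rz ⊆ D := fun p hp => hrz0sub (ball_subset_ball (min_le_left _ _) hp)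
  set κ : ℝ := rz / (32*R) with hκdef
  have hκ0 : 0 < κ := by positivity
  -- pointwise generator limits
  have hqx : Tendsto (fun h : ℝ => ‖h⁻¹ • (F h x - x) - G x‖) (𝓝[>] 0) (𝓝 0) :=
    tendsto_iff_norm_sub_tendsto_zero.mp (hlim.tendsto_at hx)
  have hqy : Tendsto (fun h : ℝ => ‖h⁻¹ • (F h y - y) - G y‖) (𝓝[>] 0) (𝓝 0) :=
    tendsto_iff_norm_sub_tendsto_zero.mp (hlim.tendsto_at hy)
  have hid0 : Tendsto (fun h : ℝ => h) (𝓝[>] (0:ℝ)) (𝓝 0) :=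
    tendsto_id.mono_right nhdsWithin_le_nhds
  have hex : Tendsto (fun h : ℝ => h * ‖h⁻¹ • (F h x - x) - G x‖) (𝓝[>] 0) (𝓝 0) := by
    simpa using hid0.mul hqx
  have hey : Tendsto (fun h : ℝ => h * ‖h⁻¹ • (F h y - y) - G y‖) (𝓝[>] 0) (𝓝 0) := by
    simpa using hid0.mul hqy
  -- the eventual main estimate
  have hmain : ∀ᶠ h in 𝓝[>] (0:ℝ), kdist D x y ≤
      (2*t/κ) * (‖h⁻¹ • (F h x - x) - G x‖ / rx + ‖h⁻¹ • (F h y - y) - G y‖ / ry) := by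
    have hIoo : Ioo (0:ℝ) t ∈ 𝓝[>] (0:ℝ) := Ioo_mem_nhdsGT_of_mem ⟨le_refl 0, ht⟩
    filter_upwards [hIoo, hex.eventually (gt_mem_nhds (by positivity : (0:ℝ) < rx/2)),
      hey.eventually (gt_mem_nhds (by positivity : (0:ℝ) < ry/4))] with h hh hexs heys
    set qx : ℝ := ‖h⁻¹ • (F h x - x) - G x‖ with hqxdef
    set qy : ℝ := ‖h⁻¹ • (F h y - y) - G y‖ with hqydef
    have h0 : 0 < h := hh.1
    have hht : h < t := hh.2
    set b : ℝ := h / (t + h) with hbdef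
    have hb0 : 0 < b := by positivity
    have hb12 : b ≤ 1/2 := by
      rw [hbdef, div_le_iff₀ (by positivity)]
      linarith
    have hbrz : b * rz ≤ R := by nlinarith
    have hqx0 : 0 ≤ qx := norm_nonneg _
    have hqy0 : 0 ≤ qy := norm_nonneg _
    -- the self-map u ↦ u + b (w - u)
    have hmD : ∀ u ∈ D, u + b • (w - u) ∈ D := by
      intro u hu
      have h2 := hDc hu hwD (by linarith : (0:ℝ) ≤ 1 - b) hb0.le (by ring)
      have h3 : (1-b)•u + b•w = u + b • (w - u) := by module
      rwa [h3] at h2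
    have hmsub : ∀ p q : E, (p + b•(w-p)) - (q + b•(w-q)) = (1-b)•(p-q) := by
      intro p q; module
    have hFmaps : Set.MapsTo (F h) D D := (hself h h0.le).1
    have hFdiff : DifferentiableOn ℂ (F h) D := (hself h h0.le).2
    have hFx : F h x ∈ D := hFmaps hx
    have hFy : F h y ∈ D := hFmaps hy
    have hΓxD : F h x + b • (w - F h x) ∈ D := hmD _ hFx
    have hΓyD : F h y + b • (w - F h y) ∈ D := hmD _ hFy
    -- the key algebraic identities and distance bounds
    have hs : (1-b)*(h/t) = b := by
      rw [hbdef]; field_simp; ring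
    have hxw : x - w = t • G x := by rw [hwdef]; abel
    have hhGx : h • G x = (h/t) • (x - w) := by
      rw [hxw, smul_smul]
      congr 1
      field_simp
    have hyw : y - w = t • G y := by rw [heq]; abel
    have hhGy : h • G y = (h/t) • (y - w) := by
      rw [hyw, smul_smul]
      congr 1
      field_simp
    have hdx : dist x (F h x + b • (w - F h x)) ≤ h * qx := by
      have e : x - (F h x + b•(w - F h x)) = (1-b) • ((x + (h/t)•(x-w)) - F h x) := by
        have expand : (1-b) • ((x + (h/t)•(x-w)) - F h x)
            = (1-b)•(x - F h x) + ((1-b)*(h/t))•(x-w) := by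
          module
        rw [expand, hs]; module
      have e3 : h • (h⁻¹ • (F h x - x) - G x) = (F h x - x) - h • G x := by
        rw [smul_sub, smul_inv_smul₀ h0.ne']
      have e2 : (x + (h/t)•(x-w)) - F h x = -(h • (h⁻¹ • (F h x - x) - G x)) := by
        rw [e3, ← hhGx]
        abel
      rw [dist_eq_norm, e, e2, norm_smul, norm_neg, norm_smul, Real.norm_eq_abs,
        Real.norm_eq_abs, abs_of_nonneg (by linarith : (0:ℝ) ≤ 1-b), abs_of_pos h0]
      nlinarith [mul_nonneg h0.le hqx0]
    have hdy : dist y (F h y + b • (w - F h y)) ≤ h * qy := by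
      have e : y - (F h y + b•(w - F h y)) = (1-b) • ((y + (h/t)•(y-w)) - F h y) := by
        have expand : (1-b) • ((y + (h/t)•(y-w)) - F h y)
            = (1-b)•(y - F h y) + ((1-b)*(h/t))•(y-w) := by
          module
        rw [expand, hs]; module
      have e3 : h • (h⁻¹ • (F h y - y) - G y) = (F h y - y) - h • G y := by
        rw [smul_sub, smul_inv_smul₀ h0.ne']
      have e2 : (y + (h/t)•(y-w)) - F h y = -(h • (h⁻¹ • (F h y - y) - G y)) := by
        rw [e3, ← hhGy]
        abel
      rw [dist_eq_norm, e, e2, norm_smul, norm_neg, norm_smul, Real.norm_eq_abs,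
        Real.norm_eq_abs, abs_of_nonneg (by linarith : (0:ℝ) ≤ 1-b), abs_of_pos h0]
      nlinarith [mul_nonneg h0.le hqy0]
    -- kdist estimates for the three pieces
    have hk1 : kdist D x (F h x + b • (w - F h x)) ≤ (h * qx) / rx := by
      refine le_trans (kdist_le_dist_div hrx hrx0 (by linarith)) ?_
      gcongr
    have hk3 : kdist D (F h y + b • (w - F h y)) y ≤ (h * qy) / (ry/2) := by
      have hballΓ : ball (F h y + b • (w - F h y)) (ry/2) ⊆ D := by
        intro p hp
        apply hry
        rw [mem_ball] at hp ⊢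
        have := dist_triangle p (F h y + b • (w - F h y)) y
        have h5 : dist (F h y + b • (w - F h y)) y ≤ h * qy := by
          rw [dist_comm]; exact hdy
        linarith
      refine le_trans (kdist_le_dist_div hballΓ (by positivity) ?_) ?_
      · rw [dist_comm]
        linarith
      · rw [dist_comm]
        gcongr
    have hcon : kdist D (F h x + b • (w - F h x)) (F h y + b • (w - F h y)) ≤
        (1 - b*rz/(16*R)) * kdist D (F h x) (F h y) :=
      kdist_contract hDc hR hwD hrzball hrzpos hb0 hb12 hbrz
        (chainVals_nonempty hDo hDc hFx hFy)
    have hnex : kdist D (F h x) (F h y) ≤ kdist D x y :=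
      kdist_comp_le hFdiff hFmaps (chainVals_nonempty hDo hDc hx hy)
    have hε16 : b*rz/(16*R) ≤ 1/16 := by
      rw [div_le_iff₀ (by positivity)]
      nlinarith
    have hcon2 : kdist D (F h x + b • (w - F h x)) (F h y + b • (w - F h y)) ≤
        (1 - b*rz/(16*R)) * kdist D x y :=
      le_trans hcon (mul_le_mul_of_nonneg_left hnex (by linarith))
    have htri : kdist D x y ≤
        kdist D x (F h x + b • (w - F h x)) +
        kdist D (F h x + b • (w - F h x)) (F h y + b • (w - F h y)) +
        kdist D (F h y + b • (w - F h y)) y := by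
      have t1 := kdist_triangle hDo hDc hx hΓxD hy
      have t2 := kdist_triangle hDo hDc hΓxD hΓyD hy
      linarith
    have hK0 : 0 ≤ kdist D x y := kdist_nonneg D x y
    -- assemble
    have hεK : b*rz/(16*R) * kdist D x y ≤ (h*qx)/rx + (h*qy)/(ry/2) := by
      nlinarith [hk1, hk3, hcon2, htri]
    have hκb : h*κ/t ≤ b*rz/(16*R) := by
      have e1 : h*κ/t = h*rz/(32*R*t) := by rw [hκdef]; field_simp; try ring
      have e2 : b*rz/(16*R) = h*rz/(16*R*(t+h)) := by rw [hbdef]; field_simp; try ring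
      rw [e1, e2]
      exact (div_le_div_iff_of_pos_left (mul_pos h0 hrzpos) (by positivity) (by positivity)).mpr
        (by nlinarith)
    have hκK : (h*κ/t) * kdist D x y ≤ 2*h*(qx/rx + qy/ry) := by
      have e3 : (h*qx)/rx = h*(qx/rx) := by ring
      have e4 : (h*qy)/(ry/2) = 2*(h*(qy/ry)) := by ring
      have e5 : 0 ≤ h*(qx/rx) := by positivity
      have e6 : 0 ≤ h*(qy/ry) := by positivity
      have e7 := mul_le_mul_of_nonneg_right hκb hK0
      nlinarith [hεK]
    have hpos : (0:ℝ) < h*κ/t := by positivity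
    have hfin : kdist D x y ≤ (2*h*(qx/rx + qy/ry)) / (h*κ/t) := by
      rw [le_div_iff₀ hpos]
      calc kdist D x y * (h*κ/t) = (h*κ/t) * kdist D x y := by ring
        _ ≤ 2*h*(qx/rx + qy/ry) := hκK
    have heq2 : (2*h*(qx/rx + qy/ry)) / (h*κ/t) = (2*t/κ) * (qx/rx + qy/ry) := by
      field_simp
    rw [heq2] at hfin
    exact hfin
  have hψ : Tendsto (fun h : ℝ => (2*t/κ) *
      (‖h⁻¹ • (F h x - x) - G x‖ / rx + ‖h⁻¹ • (F h y - y) - G y‖ / ry)) (𝓝[>] 0) (𝓝 0) := by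
    have := ((hqx.div_const rx).add (hqy.div_const ry)).const_mul (2*t/κ)
    simpa using this
  have hk0 : kdist D x y ≤ 0 := ge_of_tendsto hψ hmain
  have hd : dist x y ≤ 2*R*kdist D x y :=
    dist_le_kdist hR hR0 (chainVals_nonempty hDo hDc hx hy)
  have hd0 : dist x y ≤ 0 := le_trans hd (by nlinarith [kdist_nonneg D x y])
  exact dist_le_zero.mp hd0

end ResolventAux


/-- The images of the nonlinear resolvents of an infinitesimal
generator on a bounded convex domain contract exactly to the zero set of `G`. -/
theorem resolvent_images_contract_to_zero_set
    (n : ℕ) (D : Set (EuclideanSpace ℂ (Fin n)))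
    (hDopen : IsOpen D) (hDne : D.Nonempty) (hDconv : Convex ℝ D)
    (hDbdd : Bornology.IsBounded D)
    (G : EuclideanSpace ℂ (Fin n) → EuclideanSpace ℂ (Fin n)) (hGgen : IsInfGen D G)
    (J : ℝ → EuclideanSpace ℂ (Fin n) → EuclideanSpace ℂ (Fin n))
    (hJ : ∀ t : ℝ, 0 ≤ t → IsResolventAt D G t (J t)) :
    (⋂ t ∈ Set.Ici (0 : ℝ), J t '' D) = {z ∈ D | G z = 0} := by
  obtain ⟨F, hF⟩ := hGgen
  obtain ⟨R0, hR0gt, hRsub⟩ := hDbdd.subset_ball_lt 0 0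
  have hJ0 : ∀ w ∈ D, J 0 w = w := by
    intro w hw
    have := (hJ 0 le_rfl).2.2 w hw
    simpa using this
  ext z
  constructor
  · intro hz
    have hz' := Set.mem_iInter₂.mp hz
    obtain ⟨w0, hw0D, hw0⟩ := hz' 0 Set.self_mem_Ici
    have hzD : z ∈ D := by rw [← hw0, hJ0 w0 hw0D]; exact hw0D
    refine ⟨hzD, ?_⟩
    by_contra hGz
    have hGn : (0:ℝ) < ‖G z‖ := norm_pos_iff.mpr hGz
    set T : ℝ := (R0 + ‖z‖ + 1)/‖G z‖ with hTdef
    have hT0 : 0 ≤ T := by positivity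
    obtain ⟨wt, hwtD, hwt⟩ := hz' T (Set.mem_Ici.mpr hT0)
    have hres := (hJ T hT0).2.2 wt hwtD
    rw [hwt] at hres
    have hnorm : ‖T • G z‖ = T * ‖G z‖ := by
      rw [norm_smul, Real.norm_eq_abs, abs_of_nonneg hT0]
    have h1 : ‖wt‖ < R0 := by
      have := hRsub hwtD
      rwa [mem_ball, dist_zero_right] at this
    have h2 : T • G z = z - wt := by rw [← hres]; abel
    have h3 : T * ‖G z‖ ≤ ‖z‖ + ‖wt‖ := by
      rw [← hnorm, h2]
      exact norm_sub_le _ _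
    have hTval : T * ‖G z‖ = R0 + ‖z‖ + 1 := by
      rw [hTdef]; field_simp
    linarith
  · rintro ⟨hzD, hGz⟩
    apply Set.mem_iInter₂.mpr
    intro t ht
    have ht' : (0:ℝ) ≤ t := Set.mem_Ici.mp ht
    rcases eq_or_lt_of_le ht' with rfl | htpos
    · exact ⟨z, hzD, hJ0 z hzD⟩
    · have hyD : J t z ∈ D := (hJ t ht').1 hzD
      have hres : J t z - t • G (J t z) = z := (hJ t ht').2.2 z hzD
      have hxw : z - t • G z = z := by rw [hGz, smul_zero, sub_zero]
      have hkey : z = J t z :=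
        ResolventAux.eq_of_same_resolvent hDopen hDconv hRsub hF htpos hzD hyD
          (by rw [hxw]; exact hzD) (by rw [hxw]; exact hres.symm)
      exact ⟨z, hzD, hkey.symm⟩
end
end

section
/- Let 𝔻 be the open unit disk, τ ∈ 𝔻̄ (the closed unit disk), and p : 𝔻 → ℂ holomorphic with Re p(z) ≥ 0 for all z ∈ 𝔻, and set G(z) = (τ − z)(1 − τ̄ z)p(z), which is an infinitesimal generator on 𝔻 with nonlinear resolvents (J_t)_{t≥0}. Then for every t > 0 there exists a holomorphic function p_t : 𝔻 → ℂ with Re p_t(z) ≥ 0 for all z ∈ 𝔻 such that J_t(z) − z = t·(τ − z)(1 − τ̄ z)·p_t(z) for all z ∈ 𝔻; equivalently, G ∘ J_t = (τ − z)(1 − τ̄ z)p_t(z) with p_t(z) = (1/t)·(z − J_t(z))/((z − τ)(1 − τ̄ z)) wherever the denominator is nonzero. -/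
open Filter MeasureTheory Set Metric

noncomputable section

variable {E : Type*} [NormedAddCommGroup E] [NormedSpace ℂ E]

open Complex ComplexConjugate

lemma div_re_nonneg_of_mul_conj (z w : ℂ) (h : 0 ≤ (z * conj w).re) : 0 ≤ (z / w).re := by
  rw [Complex.div_re, ← add_div]
  apply div_nonneg _ (Complex.normSq_nonneg w)
  rw [Complex.mul_re, Complex.conj_re, Complex.conj_im] at h
  linarith

lemma ptwise (t : ℝ) (ht : 0 < t) (τ u w : ℂ) (hu : ‖u‖ < 1) (hw : 0 ≤ w.re)
    (hz : ‖u - (t : ℂ) * ((τ - u) * (1 - conj τ * u) * w)‖ < 1) :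
    0 ≤ (w * conj ((1 + (t : ℂ) * ((1 - conj τ * u) * w)) *
      (1 + (t : ℂ) * (conj τ * (τ - u) * w)))).re := by
  set a : ℂ := 1 - conj τ * u with ha
  set b : ℂ := conj τ * (τ - u) with hb
  set c : ℂ := (τ - u) * a with hc
  have e1 : w * conj ((1 + (t : ℂ) * (a * w)) * (1 + (t : ℂ) * (b * w)))
      = w + (t : ℂ) * ((Complex.normSq w : ℝ) : ℂ) * (conj (a + b) + (t : ℂ) * conj (a * b * w)) := by
    rw [← Complex.mul_conj]
    simp only [map_add, map_mul, map_one, Complex.conj_ofReal]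
    ring
  have e2 : (w * conj ((1 + (t : ℂ) * (a * w)) * (1 + (t : ℂ) * (b * w)))).re
      = w.re + t * Complex.normSq w * ((a + b).re + t * (a * b * w).re) := by
    rw [e1, show (t : ℂ) * ((Complex.normSq w : ℝ) : ℂ) = ((t * Complex.normSq w : ℝ) : ℂ) by
      push_cast; ring]
    rw [Complex.add_re, Complex.re_ofReal_mul, Complex.add_re, Complex.conj_re,
      Complex.re_ofReal_mul, Complex.conj_re]
  rw [e2]
  have key : 0 ≤ (a + b).re + t * (a * b * w).re := by
    have hz2 : Complex.normSq (u - (t : ℂ) * (c * w)) < 1 := by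
      have heq : u - (t : ℂ) * ((τ - u) * (1 - conj τ * u) * w) = u - (t : ℂ) * (c * w) := by
        rw [hc, ha]
      rw [heq] at hz
      rw [← Complex.sq_norm]
      nlinarith [norm_nonneg (u - (t : ℂ) * (c * w))]
    rw [Complex.normSq_sub] at hz2
    have hns : Complex.normSq ((t : ℂ) * (c * w)) = t ^ 2 * Complex.normSq (c * w) := by
      rw [Complex.normSq_mul, Complex.normSq_ofReal]; ring
    have hre : (u * conj ((t : ℂ) * (c * w))).re = t * (u * conj (c * w)).re := by
      rw [map_mul, Complex.conj_ofReal, show u * ((t:ℂ) * conj (c*w)) = (t:ℂ) * (u * conj (c*w)) by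
        ring, Complex.re_ofReal_mul]
    rw [hns, hre] at hz2
    have hab : a * b * w = (conj τ - conj u) * (c * w) + conj u * (c * w) := by
      rw [ha, hb, hc]; ring
    have hconj : (conj u * (c * w)).re = (u * conj (c * w)).re := by
      rw [show conj u * (c * w) = conj (u * conj (c * w)) by
        simp only [map_mul, Complex.conj_conj], Complex.conj_re]
    have habre : (a * b * w).re = ((conj τ - conj u) * (c * w)).re + (u * conj (c * w)).re := by
      rw [hab, Complex.add_re, hconj]
    have hQ : -(‖τ - u‖ * ‖c * w‖) ≤ ((conj τ - conj u) * (c * w)).re := by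
      have h1 := Complex.abs_re_le_norm ((conj τ - conj u) * (c * w))
      have h2 : ‖(conj τ - conj u) * (c * w)‖
          = ‖τ - u‖ * ‖c * w‖ := by
        rw [norm_mul, show conj τ - conj u = conj (τ - u) by rw [map_sub], Complex.norm_conj]
      rw [h2] at h1
      linarith [(abs_le.mp h1).1]
    have hapb : (a + b).re = 1 - Complex.normSq u + Complex.normSq (τ - u) := by
      have h3 : a + b = 1 + conj τ * τ - 2 * (conj τ * u) := by rw [ha, hb]; ring
      have h4 : Complex.normSq (τ - u) = Complex.normSq τ + Complex.normSq u
          - 2 * (τ * conj u).re := Complex.normSq_sub τ u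
      have h5 : (conj τ * u).re = (τ * conj u).re := by
        rw [show conj τ * u = conj (τ * conj u) by simp only [map_mul, Complex.conj_conj],
          Complex.conj_re]
      have h6 : (conj τ * τ).re = Complex.normSq τ := by
        rw [mul_comm, Complex.mul_conj, Complex.ofReal_re]
      rw [h3, Complex.sub_re, Complex.add_re, Complex.one_re, h6,
        show ((2 : ℂ) * (conj τ * u)).re = 2 * (conj τ * u).re by
          rw [show (2:ℂ) = ((2:ℝ):ℂ) by norm_num, Complex.re_ofReal_mul], h5]
      linarith
    rw [habre, hapb]
    have hsq : Complex.normSq (c * w) = ‖c * w‖ ^ 2 := (Complex.sq_norm _).symm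
    have hsqr : Complex.normSq (τ - u) = ‖τ - u‖ ^ 2 := (Complex.sq_norm _).symm
    have hsu : Complex.normSq u < 1 := by
      rw [← Complex.sq_norm]; nlinarith [norm_nonneg u]
    rw [hsq] at hz2
    rw [hsqr]
    set r := ‖τ - u‖
    set M := ‖c * w‖
    have hr : 0 ≤ r := norm_nonneg _
    have hM : 0 ≤ M := norm_nonneg _
    nlinarith [sq_nonneg (r - t * M), mul_le_mul_of_nonneg_left hQ ht.le]
  have := mul_nonneg (mul_nonneg ht.le (Complex.normSq_nonneg w)) key
  linarith

/-- For a Berkson–Porta generator `G(z) = (τ-z)(1-τ̄z)p(z)` on the unit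
disk with resolvents `(J_t)`, for each `t > 0` the Herglotz vector field `G ∘ J_t` has the
same Berkson–Porta form: `J_t(z) - z = t (τ-z)(1-τ̄z) p_t(z)` for some holomorphic `p_t`
with `Re p_t ≥ 0`. -/
theorem resolvent_herglotz_field_berkson_porta_form
    (τ : ℂ) (hτ : τ ∈ Metric.closedBall (0 : ℂ) 1)
    (p : ℂ → ℂ) (hp : DifferentiableOn ℂ p (Metric.ball (0 : ℂ) 1))
    (hpre : ∀ z ∈ Metric.ball (0 : ℂ) 1, 0 ≤ (p z).re)
    (G : ℂ → ℂ)
    (hG : ∀ z : ℂ, G z = (τ - z) * (1 - (starRingEnd ℂ) τ * z) * p z)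
    (J : ℝ → ℂ → ℂ)
    (hJ : ∀ t : ℝ, 0 ≤ t → IsResolventAt (Metric.ball (0 : ℂ) 1) G t (J t)) :
    ∀ t : ℝ, 0 < t → ∃ pt : ℂ → ℂ,
      DifferentiableOn ℂ pt (Metric.ball (0 : ℂ) 1) ∧
      (∀ z ∈ Metric.ball (0 : ℂ) 1, 0 ≤ (pt z).re) ∧
      ∀ z ∈ Metric.ball (0 : ℂ) 1,
        J t z - z = (t : ℂ) * ((τ - z) * (1 - (starRingEnd ℂ) τ * z) * pt z) := by
  intro t ht
  obtain ⟨hmaps, hdiff, heq⟩ := hJ t ht.le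
  have hball : ∀ z : ℂ, z ∈ Metric.ball (0:ℂ) 1 ↔ ‖z‖ < 1 := by
    intro z; rw [Metric.mem_ball, Complex.dist_eq, sub_zero]
  have hτ1 : ‖τ‖ ≤ 1 := by
    rw [Metric.mem_closedBall, Complex.dist_eq, sub_zero] at hτ; exact hτ
  have key : ∀ z ∈ Metric.ball (0:ℂ) 1,
      J t z - z = (t:ℂ) * ((τ - J t z) * (1 - conj τ * J t z) * p (J t z)) := by
    intro z hz
    have h := heq z hz
    rw [Complex.real_smul, hG (J t z)] at h
    linear_combination h
  have fact1 : ∀ z ∈ Metric.ball (0:ℂ) 1,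
      τ - z = (τ - J t z) * (1 + (t:ℂ) * ((1 - conj τ * J t z) * p (J t z))) := by
    intro z hz
    linear_combination key z hz
  have fact2 : ∀ z ∈ Metric.ball (0:ℂ) 1,
      1 - conj τ * z = (1 - conj τ * J t z) * (1 + (t:ℂ) * (conj τ * (τ - J t z) * p (J t z))) := by
    intro z hz
    linear_combination conj τ * key z hz
  have hone : ∀ z ∈ Metric.ball (0:ℂ) 1, (1:ℂ) - conj τ * z ≠ 0 := by
    intro z hz h0
    have hz1 : ‖z‖ < 1 := (hball z).mp hz
    have h1 : ‖conj τ * z‖ < 1 := by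
      rw [norm_mul, Complex.norm_conj]
      nlinarith [norm_nonneg z, norm_nonneg τ]
    rw [sub_eq_zero] at h0
    rw [← h0] at h1
    simp at h1
  have habs : ∀ z ∈ Metric.ball (0:ℂ) 1, ‖J t z‖ < 1 :=
    fun z hz => (hball _).mp (hmaps hz)
  -- main pointwise inequality in resolved form
  have main0 : ∀ z ∈ Metric.ball (0:ℂ) 1,
      0 ≤ (p (J t z) * conj ((1 + (t:ℂ) * ((1 - conj τ * J t z) * p (J t z))) *
        (1 + (t:ℂ) * (conj τ * (τ - J t z) * p (J t z))))).re := by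
    intro z hz
    apply ptwise t ht τ (J t z) (p (J t z)) (habs z hz) (hpre _ (hmaps hz))
    have hc : J t z - (t:ℂ) * ((τ - J t z) * (1 - conj τ * J t z) * p (J t z)) = z := by
      linear_combination key z hz
    rw [hc]
    exact (hball z).mp hz
  -- main inequality in original coordinates
  have main : ∀ z ∈ Metric.ball (0:ℂ) 1,
      0 ≤ ((J t z - z) * conj ((τ - z) * (1 - conj τ * z))).re := by
    intro z hz
    have e1 : (τ - J t z) * conj (τ - J t z) = ((Complex.normSq (τ - J t z) : ℝ) : ℂ) :=
      Complex.mul_conj _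
    have e2 : (1 - conj τ * J t z) * conj (1 - conj τ * J t z)
        = ((Complex.normSq (1 - conj τ * J t z) : ℝ) : ℂ) := Complex.mul_conj _
    have hid : (J t z - z) * conj ((τ - z) * (1 - conj τ * z))
        = ((t * (Complex.normSq (τ - J t z) * Complex.normSq (1 - conj τ * J t z)) : ℝ) : ℂ)
          * (p (J t z) * conj ((1 + (t:ℂ) * ((1 - conj τ * J t z) * p (J t z))) *
            (1 + (t:ℂ) * (conj τ * (τ - J t z) * p (J t z))))) := by
      rw [key z hz, fact1 z hz, fact2 z hz]
      push_cast
      simp only [map_mul]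
      linear_combination
        ((t:ℂ) * p (J t z) * conj (1 + (t:ℂ) * ((1 - conj τ * J t z) * p (J t z)))
          * conj (1 + (t:ℂ) * (conj τ * (τ - J t z) * p (J t z)))
          * ((τ - J t z) * conj (τ - J t z))) * e2 +
        ((t:ℂ) * p (J t z) * conj (1 + (t:ℂ) * ((1 - conj τ * J t z) * p (J t z)))
          * conj (1 + (t:ℂ) * (conj τ * (τ - J t z) * p (J t z)))
          * ((Complex.normSq (1 - conj τ * J t z) : ℝ) : ℂ)) * e1
    rw [hid, Complex.re_ofReal_mul]
    exact mul_nonneg (mul_nonneg ht.le (mul_nonneg (Complex.normSq_nonneg _)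
      (Complex.normSq_nonneg _))) (main0 z hz)
  -- fixed point at τ when τ is interior
  have hfix : τ ∈ Metric.ball (0:ℂ) 1 → J t τ = τ := by
    intro hτin
    by_contra hne
    have hC : J t τ - τ ≠ 0 := sub_ne_zero.mpr hne
    set C : ℂ := J t τ - τ with hCdef
    have hcontJ : ContinuousAt (J t) τ :=
      hdiff.continuousOn.continuousAt (isOpen_ball.mem_nhds hτin)
    have h1 : ContinuousAt (fun z : ℂ => (J t z - z) * conj (-C * (1 - conj τ * z))) τ :=
      (hcontJ.sub continuousAt_id).mul
        ((Complex.continuous_conj.comp (continuous_const.mul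
          (continuous_const.sub (continuous_const.mul continuous_id)))).continuousAt)
    have hgcont : ContinuousAt (fun z : ℂ =>
        ((J t z - z) * conj (-C * (1 - conj τ * z))).re) τ :=
      Complex.continuous_re.continuousAt.comp h1
    have hv : (J t τ - τ) * conj (-C * (1 - conj τ * τ))
        = ((-(Complex.normSq C * (1 - Complex.normSq τ)) : ℝ) : ℂ) := by
      simp only [map_mul, map_neg, map_sub, map_one, Complex.conj_conj]
      push_cast
      rw [← hCdef]
      linear_combination (-(1 - τ * conj τ)) * (Complex.mul_conj C)
        + ((Complex.normSq C : ℝ) : ℂ) * (Complex.mul_conj τ)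
    have hτsq : Complex.normSq τ < 1 := by
      have := (hball τ).mp hτin
      rw [← Complex.sq_norm]; nlinarith [norm_nonneg τ]
    have hgneg : ((J t τ - τ) * conj (-C * (1 - conj τ * τ))).re < 0 := by
      rw [hv, Complex.ofReal_re]
      have := Complex.normSq_pos.mpr hC
      nlinarith
    have htend : Filter.Tendsto (fun ε : ℝ => τ + (ε:ℂ) * C) (nhdsWithin 0 (Set.Ioi 0)) (nhds τ) := by
      have hcont : Continuous (fun ε : ℝ => τ + (ε:ℂ) * C) :=
        continuous_const.add (Complex.continuous_ofReal.mul continuous_const)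
      have h2 : Filter.Tendsto (fun ε : ℝ => τ + (ε:ℂ) * C) (nhds 0) (nhds τ) := by
        have := hcont.tendsto (0:ℝ)
        simpa using this
      exact h2.mono_left nhdsWithin_le_nhds
    have hev1 := (hgcont.tendsto.comp htend).eventually_lt_const hgneg
    have hev2 : ∀ᶠ (ε : ℝ) in nhdsWithin (0:ℝ) (Set.Ioi (0:ℝ)),
        (τ + (ε:ℂ)*C) ∈ Metric.ball (0:ℂ) 1 :=
      htend.eventually (isOpen_ball.eventually_mem hτin)
    have hev3 : ∀ᶠ (ε : ℝ) in nhdsWithin (0:ℝ) (Set.Ioi (0:ℝ)), ε ∈ Set.Ioi (0:ℝ) :=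
      eventually_mem_nhdsWithin
    obtain ⟨ε, ⟨hg1, hmem⟩, hεpos⟩ := ((hev1.and hev2).and hev3).exists
    simp only [Function.comp_apply] at hg1
    have hm := main (τ + (ε:ℂ)*C) hmem
    have hrel : (J t (τ + (ε:ℂ)*C) - (τ + (ε:ℂ)*C)) *
        conj ((τ - (τ + (ε:ℂ)*C)) * (1 - conj τ * (τ + (ε:ℂ)*C)))
        = ((ε:ℝ):ℂ) * ((J t (τ + (ε:ℂ)*C) - (τ + (ε:ℂ)*C)) *
          conj (-C * (1 - conj τ * (τ + (ε:ℂ)*C)))) := by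
      rw [show τ - (τ + (ε:ℂ)*C) = ((ε:ℝ):ℂ) * (-C) by push_cast; ring]
      simp only [map_mul, Complex.conj_ofReal]
      ring
    rw [hrel, Complex.re_ofReal_mul] at hm
    have : (0:ℝ) < ε := hεpos
    nlinarith
  -- nonvanishing of the factors
  have hAne : ∀ z ∈ Metric.ball (0:ℂ) 1,
      (1 + (t:ℂ) * ((1 - conj τ * J t z) * p (J t z))) ≠ 0 := by
    intro z hz
    by_cases hzτ : z = τ
    · have hτin : τ ∈ Metric.ball (0:ℂ) 1 := hzτ ▸ hz
      have hfx := hfix hτin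
      rw [hzτ, hfx]
      intro h0
      have hre0 : ((1:ℂ) + (t:ℂ) * ((1 - conj τ * τ) * p τ)).re
          = 1 + t * (1 - Complex.normSq τ) * (p τ).re := by
        rw [show (1:ℂ) - conj τ * τ = ((1 - Complex.normSq τ : ℝ):ℂ) by
          rw [mul_comm, Complex.mul_conj]; push_cast; ring]
        rw [show (t:ℂ) * (((1 - Complex.normSq τ : ℝ):ℂ) * p τ)
            = ((t * (1 - Complex.normSq τ) : ℝ):ℂ) * p τ by push_cast; ring]
        rw [Complex.add_re, Complex.one_re, Complex.re_ofReal_mul]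
      rw [h0] at hre0
      simp only [Complex.zero_re] at hre0
      have hτsq : Complex.normSq τ < 1 := by
        have := (hball τ).mp hτin
        rw [← Complex.sq_norm]; nlinarith [norm_nonneg τ]
      have hpτ : 0 ≤ (p τ).re := hpre τ hτin
      nlinarith [mul_nonneg (mul_nonneg ht.le (by linarith : (0:ℝ) ≤ 1 - Complex.normSq τ)) hpτ]
    · intro h0
      have h1 := fact1 z hz
      rw [h0, mul_zero] at h1
      exact hzτ (by linear_combination -h1)
  have hBne : ∀ z ∈ Metric.ball (0:ℂ) 1,
      (1 + (t:ℂ) * (conj τ * (τ - J t z) * p (J t z))) ≠ 0 := by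
    intro z hz h0
    exact hone z hz (by rw [fact2 z hz, h0, mul_zero])
  -- differentiability
  have hqdiff : DifferentiableOn ℂ (fun z => p (J t z)) (Metric.ball (0:ℂ) 1) :=
    hp.comp hdiff hmaps
  have hAdiff : DifferentiableOn ℂ
      (fun z => 1 + (t:ℂ) * ((1 - conj τ * J t z) * p (J t z))) (Metric.ball (0:ℂ) 1) :=
    (differentiableOn_const _).add
      ((((differentiableOn_const _).sub (hdiff.const_mul (conj τ))).mul hqdiff).const_mul (t:ℂ))
  have hBdiff : DifferentiableOn ℂ
      (fun z => 1 + (t:ℂ) * (conj τ * (τ - J t z) * p (J t z))) (Metric.ball (0:ℂ) 1) :=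
    (differentiableOn_const _).add
      (((((differentiableOn_const (τ:ℂ)).sub hdiff).const_mul (conj τ)).mul hqdiff).const_mul (t:ℂ))
  refine ⟨fun z => p (J t z) / ((1 + (t:ℂ) * ((1 - conj τ * J t z) * p (J t z))) *
    (1 + (t:ℂ) * (conj τ * (τ - J t z) * p (J t z)))), ?_, ?_, ?_⟩
  · exact hqdiff.div (hAdiff.mul hBdiff)
      (fun z hz => mul_ne_zero (hAne z hz) (hBne z hz))
  · intro z hz
    exact div_re_nonneg_of_mul_conj _ _ (main0 z hz)
  · intro z hz
    rw [fact1 z hz, fact2 z hz, key z hz]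
    beta_reduce
    linear_combination (-((t:ℂ) * ((τ - J t z) * (1 - conj τ * J t z) * p (J t z)))) *
      mul_inv_cancel₀ (mul_ne_zero (hAne z hz) (hBne z hz))
end
end
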